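/- Let c₁, c₂, u, τ be real numbers and set ω = √(1 + u²). Let U = Matrix.exp( −(τ·I) • (σx + u·σz) ) (a 2×2 complex matrix). Then Tr( U * (c₁·σx + c₂·σy) * Uᴴ * σz ) = (2/(1+u²)) · ( c₂·ω·sin(2τω) + u·c₁·(1 − cos(2τω)) ), where the right-hand side is a real number coerced to ℂ. -/

import Mathlib

open Matrix

noncomputable section

/-- Pauli matrix σx. -/
def σx : Matrix (Fin 2) (Fin 2) ℂ := !![0, 1; 1, 0]

/-- Pauli matrix σy. -/
def σy : Matrix (Fin 2) (Fin 2) ℂ := !![0, -Complex.I; Complex.I, 0]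

/-- Pauli matrix σz. -/
def σz : Matrix (Fin 2) (Fin 2) ℂ := !![1, 0; 0, -1]

lemma diag2 (a b : ℂ) : (diagonal ![a, b] : Matrix (Fin 2) (Fin 2) ℂ) = !![a, 0; 0, b] := by
  ext i j
  fin_cases i <;> fin_cases j <;> simp [Matrix.diagonal_apply]

set_option maxHeartbeats 1000000 in
lemma exp_bang (u τ ω : ℝ) (hω : ω = Real.sqrt (1 + u ^ 2)) :
    NormedSpace.exp ((-(τ : ℂ) * Complex.I) • (σx + (u : ℂ) • σz)) =
      !![(Real.cos (τ*ω) : ℂ) - Complex.I * u * Real.sin (τ*ω) / ω,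
          -Complex.I * Real.sin (τ*ω) / ω;
         -Complex.I * Real.sin (τ*ω) / ω,
          (Real.cos (τ*ω) : ℂ) + Complex.I * u * Real.sin (τ*ω) / ω] := by
  have hωpos : 0 < ω := by
    rw [hω]; positivity
  have hω2 : (ω : ℂ) ^ 2 = 1 + (u : ℂ) ^ 2 := by
    have : ω ^ 2 = 1 + u ^ 2 := by
      rw [hω, Real.sq_sqrt]; positivity
    exact_mod_cast congrArg (Complex.ofReal) this
  have hωne : (ω : ℂ) ≠ 0 := by exact_mod_cast hωpos.ne'
  set P : Matrix (Fin 2) (Fin 2) ℂ := !![(u : ℂ) + ω, u - ω; 1, 1] with hP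
  set Q : Matrix (Fin 2) (Fin 2) ℂ :=
    ((2 * ω : ℂ))⁻¹ • !![1, (ω : ℂ) - u; -1, (ω : ℂ) + u] with hQ
  have hPQ : P * Q = 1 := by
    ext i j
    fin_cases i <;> fin_cases j <;>
      simp [hP, hQ, Matrix.mul_apply, Fin.sum_univ_succ, Matrix.smul_apply] <;>
      field_simp <;> ring
  have hQP : Q * P = 1 := by
    ext i j
    fin_cases i <;> fin_cases j <;>
      simp [hP, hQ, Matrix.mul_apply, Fin.sum_univ_succ, Matrix.smul_apply] <;>
      field_simp <;> ring
  set Pu : (Matrix (Fin 2) (Fin 2) ℂ)ˣ := ⟨P, Q, hPQ, hQP⟩ with hPu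
  have hM : (-(τ : ℂ) * Complex.I) • (σx + (u : ℂ) • σz) =
      (Pu : Matrix (Fin 2) (Fin 2) ℂ) *
        (diagonal ![-(τ : ℂ) * Complex.I * ω, (τ : ℂ) * Complex.I * ω] :
          Matrix (Fin 2) (Fin 2) ℂ) * (↑Pu⁻¹ : Matrix (Fin 2) (Fin 2) ℂ) := by
    have hPuinv : (↑Pu⁻¹ : Matrix (Fin 2) (Fin 2) ℂ) = Q := rfl
    rw [hPuinv, diag2]
    ext i j
    fin_cases i <;> fin_cases j <;>
      simp [hPu, hP, hQ, σx, σz, Matrix.mul_apply, Fin.sum_univ_succ, Matrix.smul_apply,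
        Matrix.diagonal_apply] <;>
      field_simp <;>
      first
        | ring1
        | linear_combination (-(τ : ℂ) * Complex.I) * hω2
        | linear_combination ((τ : ℂ) * Complex.I) * hω2
        | linear_combination ((τ : ℂ) * Complex.I) * (4 * (ω : ℂ) ^ 2 - 1) * hω2
        | linear_combination (-(τ : ℂ) * Complex.I) * (4 * (ω : ℂ) ^ 2 - 1) * hω2
        | linear_combination (4 * (τ : ℂ) * Complex.I * (ω : ℂ) ^ 2) * hω2
        | linear_combination (-4 * (τ : ℂ) * Complex.I * (ω : ℂ) ^ 2) * hω2
        | linear_combination (2 * (τ : ℂ)) * hω2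
  rw [hM, Matrix.exp_units_conj, Matrix.exp_diagonal]
  have hPuinv : (↑Pu⁻¹ : Matrix (Fin 2) (Fin 2) ℂ) = Q := rfl
  rw [hPuinv]
  have hexp : ∀ z : ℂ, NormedSpace.exp z = Complex.exp z := fun z =>
    (Complex.exp_eq_exp_ℂ ▸ rfl)
  have e2 : Complex.exp ((τ : ℂ) * Complex.I * ω) =
      (Real.cos (τ*ω) : ℂ) + Complex.I * Real.sin (τ*ω) := by
    have h : ((τ : ℂ) * Complex.I * ω) = ((τ*ω : ℝ) : ℂ) * Complex.I := by push_cast; ring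
    rw [h, Complex.exp_mul_I, ← Complex.ofReal_cos, ← Complex.ofReal_sin]
    ring
  have e1 : Complex.exp (-((τ : ℂ) * Complex.I * ω)) =
      (Real.cos (τ*ω) : ℂ) - Complex.I * Real.sin (τ*ω) := by
    have h : (-((τ : ℂ) * Complex.I * ω)) = ((-(τ*ω) : ℝ) : ℂ) * Complex.I := by push_cast; ring
    rw [h, Complex.exp_mul_I, Complex.ofReal_neg, Complex.cos_neg, Complex.sin_neg,
      ← Complex.ofReal_cos, ← Complex.ofReal_sin]
    ring
  have hd : (diagonal (NormedSpace.exp ![-(τ : ℂ) * Complex.I * ω, (τ : ℂ) * Complex.I * ω]) :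
      Matrix (Fin 2) (Fin 2) ℂ) =
      !![(Real.cos (τ*ω) : ℂ) - Complex.I * Real.sin (τ*ω), 0; 0,
         (Real.cos (τ*ω) : ℂ) + Complex.I * Real.sin (τ*ω)] := by
    have hv : (NormedSpace.exp ![-(τ : ℂ) * Complex.I * ω, (τ : ℂ) * Complex.I * ω]) =
        ![(Real.cos (τ*ω) : ℂ) - Complex.I * Real.sin (τ*ω),
          (Real.cos (τ*ω) : ℂ) + Complex.I * Real.sin (τ*ω)] := by
      funext i
      fin_cases i <;> simp [Pi.coe_exp, hexp, e1, e2]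
    rw [hv, diag2]
  rw [hd]
  ext i j
  fin_cases i <;> fin_cases j <;>
    simp [hPu, hP, hQ, Matrix.mul_apply, Fin.sum_univ_succ, Matrix.smul_apply] <;>
    field_simp <;>
    first
      | ring1
      | linear_combination (2 * (ω:ℂ) * Complex.I * Complex.sin ((τ:ℂ) * (ω:ℂ))) * hω2
      | linear_combination (-2 * (ω:ℂ) * Complex.I * Complex.sin ((τ:ℂ) * (ω:ℂ))) * hω2
      | linear_combination ((ω:ℂ) * Complex.I * Complex.sin ((τ:ℂ) * (ω:ℂ))) * hω2
      | linear_combination (-(ω:ℂ) * Complex.I * Complex.sin ((τ:ℂ) * (ω:ℂ))) * hω2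
      | linear_combination (-2 * Complex.I * Complex.sin ((ω:ℂ) * (τ:ℂ))) * hω2

set_option maxHeartbeats 1000000 in
/-- The switching function of the PMP along a bang arc of the Landau–Zener system:
explicit value of `Tr(U (c₁σx + c₂σy) Uᴴ σz)` for the propagator `U` of a bang arc with
constant control `u` over time `τ`. -/
theorem switching_function_along_bang_arc (c₁ c₂ u τ : ℝ) (ω : ℝ)
    (hω : ω = Real.sqrt (1 + u ^ 2))
    (U : Matrix (Fin 2) (Fin 2) ℂ)
    (hU : U = NormedSpace.exp ((-(τ : ℂ) * Complex.I) • (σx + (u : ℂ) • σz))) :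
    Matrix.trace (U * ((c₁ : ℂ) • σx + (c₂ : ℂ) • σy) * Uᴴ * σz) =
      ((2 / (1 + u ^ 2) *
        (c₂ * ω * Real.sin (2 * τ * ω) + u * c₁ * (1 - Real.cos (2 * τ * ω))) : ℝ) : ℂ) := by
  have hωpos : 0 < ω := by rw [hω]; positivity
  have hω2 : (ω : ℂ) ^ 2 = 1 + (u : ℂ) ^ 2 := by
    have : ω ^ 2 = 1 + u ^ 2 := by rw [hω, Real.sq_sqrt]; positivity
    exact_mod_cast congrArg (Complex.ofReal) this
  have hωne : (ω : ℂ) ≠ 0 := by exact_mod_cast hωpos.ne'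
  rw [hU, exp_bang u τ ω hω]
  set c : ℝ := Real.cos (τ*ω) with hc
  set s : ℝ := Real.sin (τ*ω) with hs
  have hsc : (s : ℂ) ^ 2 + (c : ℂ) ^ 2 = 1 := by
    exact_mod_cast congrArg Complex.ofReal (Real.sin_sq_add_cos_sq (τ*ω))
  have h2 : 2 * τ * ω = 2 * (τ * ω) := by ring
  rw [h2, Real.sin_two_mul, Real.cos_two_mul, ← hc, ← hs]
  push_cast
  rw [Matrix.trace]
  simp only [σx, σy, σz, Matrix.conjTranspose_apply, Matrix.mul_apply, Matrix.smul_apply,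
    Matrix.add_apply, Fin.sum_univ_succ, Finset.sum_empty, Fin.sum_univ_zero,
    Matrix.diag_apply, Matrix.of_apply, Matrix.cons_val', Matrix.cons_val_zero, Matrix.cons_val_one, Matrix.cons_val_succ,
    Matrix.head_cons, Matrix.head_fin_const, Matrix.empty_val', Matrix.cons_val_fin_one,
    smul_eq_mul, star_sub, star_add, star_mul', star_div₀, Complex.star_def,
    Complex.conj_ofReal, Complex.conj_I, map_ofNat, _root_.map_one, _root_.map_zero, map_neg,
    map_sub, map_add, map_mul, map_div₀]
  field_simp [hωne]
  ring_nf
  have hk : ((1 : ℂ) + (u : ℂ) ^ 2)⁻¹ * (ω : ℂ) ^ 2 = 1 := by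
    rw [← hω2]; exact inv_mul_cancel₀ (pow_ne_zero 2 hωne)
  linear_combination
    (-4 * (s:ℂ) * (c:ℂ) * (c₂:ℂ) * (ω:ℂ) - 4 * (s:ℂ)^2 * (c₁:ℂ) * (u:ℂ)) * Complex.I_sq
      + (-4 * (s:ℂ) * (c₂:ℂ) * (c:ℂ) * (ω:ℂ) + 4 * (c:ℂ)^2 * (c₁:ℂ) * (u:ℂ)
          - 4 * (c₁:ℂ) * (u:ℂ)) * hk
      + (4 * (c₁:ℂ) * (u:ℂ)) * hsc

end
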